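/- Let m be a closed and coherent integer DBM of dimension 2n, and define the DBM m' by m'[i,j] = min( m[i,j], ⌊m[i,ī]/2⌋ + ⌊m[j̄,j]/2⌋ ) for all i,j. Then m' is either tightly closed or it is not consistent. -/

import Mathlib

namespace Octagon

/-- An integer DBM of dimension `2*n` with entries in `ℤ ∪ {+∞}`. -/
abbrev DBM (n : ℕ) : Type := Fin (2 * n) → Fin (2 * n) → WithTop ℤ

/-- `bar i = i + 1` if `i` is even, `i - 1` if `i` is odd. -/
def bar {n : ℕ} (i : Fin (2 * n)) : Fin (2 * n) :=
  if h : (i : ℕ) % 2 = 0 then ⟨(i : ℕ) + 1, by have := i.isLt; omega⟩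
  else ⟨(i : ℕ) - 1, by have := i.isLt; omega⟩

/-- A DBM is closed iff its diagonal is zero and it satisfies the triangle inequality. -/
def Closed {n : ℕ} (m : DBM n) : Prop :=
  (∀ i, m i i = 0) ∧ ∀ i j k, m i j ≤ m i k + m k j

/-- A DBM is consistent iff its diagonal entries are nonnegative. -/
def Consistent {n : ℕ} (m : DBM n) : Prop :=
  ∀ i, 0 ≤ m i i

/-- A DBM is coherent iff `m[i,j] = m[bar j, bar i]` for all `i, j`. -/
def Coherent {n : ℕ} (m : DBM n) : Prop :=
  ∀ i j, m i j = m (bar j) (bar i)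

/-- Incremental closure of `m` with the new constraint `x'_a - x'_b ≤ d`. -/
def IncClose {n : ℕ} (m : DBM n) (a b : Fin (2 * n)) (d : ℤ) : DBM n :=
  fun i j =>
    min (m i j) <|
    min (m i a + (d : WithTop ℤ) + m b j) <|
    min (m i (bar b) + (d : WithTop ℤ) + m (bar a) j) <|
    min (m i (bar b) + (d : WithTop ℤ) + m (bar a) a + (d : WithTop ℤ) + m b j)
        (m i a + (d : WithTop ℤ) + m b (bar b) + (d : WithTop ℤ) + m (bar a) j)

/-- Floor halving `⌊x/2⌋` on `ℤ ∪ {+∞}`, mapping `+∞` to `+∞`. -/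
def fhalve : WithTop ℤ → WithTop ℤ := WithTop.map (fun x => Int.fdiv x 2)

/-- The entrywise tightening operation `x ↦ 2·⌊x/2⌋`, mapping `+∞` to `+∞`. -/
def tightEntry : WithTop ℤ → WithTop ℤ := WithTop.map (fun x => 2 * Int.fdiv x 2)

/-- Tightening of an integer DBM: key entries `m[i, bar i]` are replaced by
`2·⌊m[i, bar i]/2⌋`, all other entries are unchanged. -/
def Tighten {n : ℕ} (m : DBM n) : DBM n :=
  fun i j => if j = bar i then tightEntry (m i j) else m i j

/-- Integer strengthening of a DBM. -/
def Strengthen {n : ℕ} (m : DBM n) : DBM n :=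
  fun i j => min (m i j) (fhalve (m i (bar i)) + fhalve (m (bar j) j))

/-- An extended integer is even iff it is `+∞` or a finite even integer. -/
def EvenTop (x : WithTop ℤ) : Prop :=
  x = ⊤ ∨ ∃ k : ℤ, x = ((2 * k : ℤ) : WithTop ℤ)

lemma bar_bar {n : ℕ} (i : Fin (2 * n)) : bar (bar i) = i := by
  have := i.isLt
  unfold bar
  split <;> rename_i h1
  · have h2 : ((⟨(i : ℕ) + 1, by omega⟩ : Fin (2 * n)) : ℕ) % 2 ≠ 0 := by simp; omega
    simp only [dif_neg h2]
    apply Fin.ext; simp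
  · have h2 : ((⟨(i : ℕ) - 1, by omega⟩ : Fin (2 * n)) : ℕ) % 2 = 0 := by simp; omega
    simp only [dif_pos h2]
    apply Fin.ext; simp; omega

lemma fhalve_add_fhalve_le (x : WithTop ℤ) : fhalve x + fhalve x ≤ x := by
  induction x using WithTop.recTopCoe with
  | top => exact le_top
  | coe x =>
    simp only [fhalve, WithTop.map_coe, ← WithTop.coe_add, WithTop.coe_le_coe]
    rw [Int.fdiv_eq_ediv_of_nonneg _ (by norm_num)]
    omega

lemma fhalve_mono_two (x c y : WithTop ℤ) (h : x ≤ c + c + y) :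
    fhalve x ≤ c + fhalve y := by
  induction c using WithTop.recTopCoe with
  | top => simp
  | coe c =>
    induction y using WithTop.recTopCoe with
    | top => simp [fhalve]
    | coe y =>
      induction x using WithTop.recTopCoe with
      | top =>
        exfalso
        rw [← WithTop.coe_add, ← WithTop.coe_add, top_le_iff] at h
        exact WithTop.coe_ne_top h
      | coe x =>
        simp only [fhalve, WithTop.map_coe, ← WithTop.coe_add, WithTop.coe_le_coe] at h ⊢
        rw [Int.fdiv_eq_ediv_of_nonneg _ (by norm_num), Int.fdiv_eq_ediv_of_nonneg _ (by norm_num)]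
        omega

lemma fhalve_add_self_even (x : WithTop ℤ) : EvenTop (fhalve x + fhalve x) := by
  induction x using WithTop.recTopCoe with
  | top => left; rfl
  | coe x =>
    right
    exact ⟨x.fdiv 2, by simp only [fhalve, WithTop.map_coe, ← WithTop.coe_add,
      WithTop.coe_inj]; ring⟩

/-- Theorem: tightening-and-strengthening a closed coherent integer DBM in one
step yields a DBM that is tightly closed or inconsistent. -/
theorem tighten_strengthen_tightlyClosed_or_not_consistent {n : ℕ} (m : DBM n)
    (hcl : Closed m) (hcoh : Coherent m) (m' : DBM n)
    (hm' : ∀ i j, m' i j = min (m i j) (fhalve (m i (bar i)) + fhalve (m (bar j) j))) :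
    (Closed m' ∧
     (∀ i j, m' i j + m' i j ≤ m' i (bar i) + m' (bar j) j) ∧
     (∀ i, EvenTop (m' i (bar i)))) ∨ ¬ Consistent m' := by
  obtain ⟨hdiag, htri⟩ := hcl
  set h : Fin (2 * n) → WithTop ℤ := fun i => fhalve (m i (bar i)) with hh
  -- rewrite m' in terms of h
  have hm'2 : ∀ i j, m' i j = min (m i j) (h i + h (bar j)) := by
    intro i j
    rw [hm' i j, hh]
    simp only [bar_bar]
  -- coherence corollaries
  have hcoh' : ∀ i k : Fin (2 * n), m (bar k) (bar i) = m i k := fun i k => (hcoh i k).symm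
  -- key inequality: h i ≤ m i k + h k
  have key : ∀ i k : Fin (2 * n), h i ≤ m i k + h k := by
    intro i k
    apply fhalve_mono_two
    calc m i (bar i) ≤ m i k + m k (bar i) := htri i (bar i) k
      _ ≤ m i k + (m k (bar k) + m (bar k) (bar i)) := by
          exact add_le_add_right (htri k (bar i) (bar k)) _
      _ = m i k + m i k + m k (bar k) := by
          rw [hcoh' i k]; simp only [add_comm, add_assoc, add_left_comm]
  by_cases hpos : ∀ i : Fin (2 * n), 0 ≤ h i + h (bar i)
  · left
    -- key diagonal-value facts
    have hkey : ∀ i : Fin (2 * n), m' i (bar i) = h i + h i := by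
      intro i
      rw [hm'2 i (bar i), bar_bar]
      exact min_eq_right (fhalve_add_fhalve_le _)
    refine ⟨⟨?_, ?_⟩, ?_, ?_⟩
    · -- zero diagonal
      intro i
      rw [hm'2 i i, hdiag i]
      exact min_eq_left (hpos i)
    · -- triangle inequality
      intro i j k
      have hub1 : m' i j ≤ m i j := (hm'2 i j) ▸ min_le_left _ _
      have hub2 : m' i j ≤ h i + h (bar j) := (hm'2 i j) ▸ min_le_right _ _
      rcases min_cases (m i k) (h i + h (bar k)) with ⟨e1, _⟩ | ⟨e1, _⟩ <;>
        rcases min_cases (m k j) (h k + h (bar j)) with ⟨e2, _⟩ | ⟨e2, _⟩ <;>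
        rw [hm'2 i k, hm'2 k j, e1, e2]
      · exact hub1.trans (htri i j k)
      · calc m' i j ≤ h i + h (bar j) := hub2
          _ ≤ (m i k + h k) + h (bar j) := add_le_add_left (key i k) _
          _ = m i k + (h k + h (bar j)) := by rw [add_assoc]
      · have hbj : h (bar j) ≤ m k j + h (bar k) := by
          have := key (bar j) (bar k)
          rwa [hcoh' k j] at this
        calc m' i j ≤ h i + h (bar j) := hub2
          _ ≤ h i + (m k j + h (bar k)) := add_le_add_right hbj _
          _ = (h i + h (bar k)) + m k j := by simp only [add_comm, add_assoc, add_left_comm]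
      · have hk0 : (0 : WithTop ℤ) ≤ h k + h (bar k) := hpos k
        calc m' i j ≤ h i + h (bar j) := hub2
          _ ≤ (h i + h (bar j)) + (h k + h (bar k)) := le_add_of_nonneg_right hk0
          _ = (h i + h (bar k)) + (h k + h (bar j)) := by simp only [add_comm, add_assoc, add_left_comm]
    · -- strong closure
      intro i j
      have hub2 : m' i j ≤ h i + h (bar j) := (hm'2 i j) ▸ min_le_right _ _
      have hj : m' (bar j) j = h (bar j) + h (bar j) := by
        have := hkey (bar j)
        rwa [bar_bar] at this
      rw [hkey i, hj]
      calc m' i j + m' i j ≤ (h i + h (bar j)) + (h i + h (bar j)) :=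
            add_le_add hub2 hub2
        _ = (h i + h i) + (h (bar j) + h (bar j)) := by simp only [add_comm, add_assoc, add_left_comm]
    · -- evenness
      intro i
      rw [hkey i]
      exact fhalve_add_self_even _
  · right
    push_neg at hpos
    obtain ⟨i, hi⟩ := hpos
    intro hc
    exact (not_le.mpr hi) (le_trans (hc i) ((hm'2 i i) ▸ min_le_right _ _))

end Octagon
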